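/- Let 𝒜 = (A_i : i ∈ [r]) be a presentation of a transversal matroid M on E, and define the support s_𝒜(X) = {i ∈ [r] : X ∩ A_i ≠ ∅}. If C is a circuit of M and e ∈ C, then |s_𝒜(C)| = |s_𝒜(C \ {e})| = |C| - 1, and hence s_𝒜(C) = s_𝒜(C \ {e}). -/

import Mathlib

/-- `Y` is a partial transversal of the set system `A : Fin r → Set α`. -/
def IsPartialTransversal {α : Type*} {r : ℕ} (A : Fin r → Set α) (Y : Set α) : Prop :=
  ∃ φ : α → Fin r, Set.InjOn φ Y ∧ ∀ y ∈ Y, y ∈ A (φ y)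

/-- The `𝒜`-support of `X`: the indices `i` with `X ∩ A_i ≠ ∅`. -/
def supp {α : Type*} {r : ℕ} (A : Fin r → Set α) (X : Set α) : Set (Fin r) :=
  {i | (X ∩ A i).Nonempty}

lemma supp_mono {α : Type*} {r : ℕ} (A : Fin r → Set α) {X Y : Set α} (h : X ⊆ Y) :
    supp A X ⊆ supp A Y := by
  rintro i ⟨x, hx, hxi⟩
  exact ⟨x, h hx, hxi⟩

lemma card_le_supp {α : Type*} {r : ℕ} [Finite α] (A : Fin r → Set α) (X : Set α)
    (h : IsPartialTransversal A X) : X.ncard ≤ (supp A X).ncard := by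
  obtain ⟨φ, hinj, hmem⟩ := h
  have himg : φ '' X ⊆ supp A X := by
    rintro i ⟨x, hx, rfl⟩; exact ⟨x, hx, hmem x hx⟩
  calc X.ncard = (φ '' X).ncard := (Set.ncard_image_of_injOn hinj).symm
    _ ≤ _ := Set.ncard_le_ncard himg (Set.toFinite _)

lemma hall_violator {α : Type*} {r : ℕ} [Finite α] (A : Fin r → Set α) (C : Set α)
    (hφ : Nonempty (α → Fin r)) (h : ¬ IsPartialTransversal A C) :
    ∃ X ⊆ C, (supp A X).ncard < X.ncard := by
  classical
  have : Fintype α := Fintype.ofFinite α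
  by_contra hcon
  push_neg at hcon
  set t : ↥C → Finset (Fin r) := fun x => Finset.univ.filter (fun i => (x : α) ∈ A i) with ht
  have hall : ∀ s : Finset ↥C, s.card ≤ (s.biUnion t).card := by
    intro s
    set X : Set α := ↑(s.image (Subtype.val)) with hX
    have hXC : X ⊆ C := by
      rintro a ha
      simp only [hX, Finset.coe_image, Set.mem_image, Finset.mem_coe] at ha
      obtain ⟨x, _, rfl⟩ := ha
      exact x.2
    have hsupp : supp A X = ↑(s.biUnion t) := by
      ext i
      simp only [supp, Set.mem_setOf_eq, Finset.coe_biUnion, Set.mem_iUnion, Finset.mem_coe,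
        ht, Finset.mem_filter, Finset.mem_univ, true_and, hX]
      constructor
      · rintro ⟨a, ha, hai⟩
        simp only [Finset.coe_image, Set.mem_image, Finset.mem_coe] at ha
        obtain ⟨x, hx, rfl⟩ := ha
        exact ⟨x, hx, hai⟩
      · rintro ⟨x, hx, hxi⟩
        exact ⟨x, by simp [hx], hxi⟩
    have h1 : X.ncard = s.card := by
      rw [hX, Set.ncard_coe_finset, Finset.card_image_of_injective _ Subtype.val_injective]
    have h2 : (supp A X).ncard = (s.biUnion t).card := by rw [hsupp, Set.ncard_coe_finset]
    have := hcon X hXC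
    omega
  obtain ⟨f, hfinj, hfmem⟩ := (Finset.all_card_le_biUnion_card_iff_existsInjective' t).mp hall
  apply h
  refine ⟨fun a => if ha : a ∈ C then f ⟨a, ha⟩ else hφ.some a, ?_, ?_⟩
  · intro x hx y hy hxy
    simp only [dif_pos hx, dif_pos hy] at hxy
    exact congrArg Subtype.val (hfinj hxy)
  · intro y hy
    simp only [dif_pos hy]
    have := hfmem ⟨y, hy⟩
    simpa [ht] using this

/-- If `C` is a circuit of the transversal matroid `M[𝒜]` and `e ∈ C`, then
`|s_𝒜(C)| = |s_𝒜(C ∖ {e})| = |C| - 1`, and hence `s_𝒜(C) = s_𝒜(C ∖ {e})`. -/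
theorem stmt_12 {α : Type*} {r : ℕ} [Finite α] (E : Set α) (A : Fin r → Set α)
    (hA : ∀ i, A i ⊆ E)
    (M : Matroid α) (hME : M.E = E)
    (hInd : ∀ I, M.Indep I ↔ I ⊆ E ∧ IsPartialTransversal A I)
    (C : Set α) (hCdep : M.Dep C) (hCmin : ∀ D, D ⊂ C → M.Indep D)
    (e : α) (he : e ∈ C) :
    (supp A C).ncard = C.ncard - 1 ∧
    (supp A (C \ {e})).ncard = C.ncard - 1 ∧
    supp A C = supp A (C \ {e}) := by
  have hCE : C ⊆ E := hME ▸ hCdep.subset_ground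
  have hφ : Nonempty (α → Fin r) := by
    obtain ⟨-, φ, -, -⟩ := (hInd ∅).mp M.empty_indep
    exact ⟨φ⟩
  have hnotPT : ¬ IsPartialTransversal A C := fun h =>
    hCdep.not_indep ((hInd C).mpr ⟨hCE, h⟩)
  obtain ⟨X, hXC, hX⟩ := hall_violator A C hφ hnotPT
  have hXeq : X = C := by
    by_contra hne
    have hXPT : IsPartialTransversal A X :=
      ((hInd X).mp (hCmin X ⟨hXC, fun h => hne (Set.Subset.antisymm hXC h)⟩)).2
    exact absurd (card_le_supp A X hXPT) (not_le.mpr hX)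
  subst hXeq
  have hlt : (supp A X).ncard < X.ncard := hX
  have hdiff : (X \ {e}) ⊂ X := Set.sdiff_singleton_ssubset.mpr he
  have hdPT : IsPartialTransversal A (X \ {e}) := ((hInd _).mp (hCmin _ hdiff)).2
  have hge : (X \ {e}).ncard ≤ (supp A (X \ {e})).ncard := card_le_supp A _ hdPT
  have hdcard : (X \ {e}).ncard = X.ncard - 1 :=
    Set.ncard_diff_singleton_of_mem he
  have hmono : (supp A (X \ {e})).ncard ≤ (supp A X).ncard :=
    Set.ncard_le_ncard (supp_mono A Set.diff_subset) (Set.toFinite _)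
  have hpos : 1 ≤ X.ncard := (Set.ncard_pos (Set.toFinite X)).mpr ⟨e, he⟩
  have h1 : (supp A X).ncard = X.ncard - 1 := by omega
  have h2 : (supp A (X \ {e})).ncard = X.ncard - 1 := by omega
  refine ⟨h1, h2, ?_⟩
  exact (Set.eq_of_subset_of_ncard_le (supp_mono A Set.diff_subset) (by omega)).symm
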